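/- Let n ≥ 2 and let p = (p_1, ..., p_n) be a probability vector with 0 < p_i ≤ ε for all i, where ε > 0. Then Σ_{i=1}^n log(n p_i) ≤ -(1/(2ε²)) Σ_{i=1}^n (p_i - 1/n)². -/

import Mathlib

private lemma hasDerivAt_aux (ε a : ℝ) (y : ℝ) (hy : 0 < y) :
    HasDerivAt (fun z : ℝ => (z - a) / a - (z - a) ^ 2 / (2 * ε ^ 2) - Real.log z)
      (1 / a - (y - a) / ε ^ 2 - 1 / y) y := by
  have h1 : HasDerivAt (fun z : ℝ => (z - a) / a) (1 / a) y := by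
    have := ((hasDerivAt_id y).sub_const a).div_const a
    simpa using this
  have h2 : HasDerivAt (fun z : ℝ => (z - a) ^ 2 / (2 * ε ^ 2)) ((y - a) / ε ^ 2) y := by
    have := (((hasDerivAt_id y).sub_const a).pow 2).div_const (2 * ε ^ 2)
    refine this.congr_deriv ?_
    simp only [id_eq]
    ring
  have h3 : HasDerivAt Real.log (1 / y) y := by
    simpa [one_div] using Real.hasDerivAt_log (ne_of_gt hy)
  exact (h1.sub h2).sub h3

private lemma key_ineq (ε a x : ℝ) (hε : 0 < ε) (ha : 0 < a) (hae : a ≤ ε)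
    (hx : 0 < x) (hxe : x ≤ ε) :
    Real.log x - Real.log a ≤ (x - a) / a - (x - a) ^ 2 / (2 * ε ^ 2) := by
  set g : ℝ → ℝ := fun z => (z - a) / a - (z - a) ^ 2 / (2 * ε ^ 2) - Real.log z with hg
  have hga : g a = -Real.log a := by simp [hg]
  have hcont : ∀ s : Set ℝ, s ⊆ Set.Ioi (0:ℝ) → ContinuousOn g s := by
    intro s hs
    apply ContinuousOn.sub
    · apply ContinuousOn.sub
      · fun_prop
      · fun_prop
    · exact (Real.continuousOn_log).mono (by intro z hz; exact ne_of_gt (hs hz))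
  suffices h : g a ≤ g x by
    simp only [hg] at h hga
    rw [hga] at h
    linarith
  rcases le_total x a with hxa | hax
  · -- g is antitone on [x, a]
    have hanti : AntitoneOn g (Set.Icc x a) := by
      apply antitoneOn_of_deriv_nonpos (convex_Icc x a)
      · exact hcont _ (fun z hz => lt_of_lt_of_le hx hz.1)
      · intro y hy
        rw [interior_Icc] at hy
        have hy0 : 0 < y := lt_trans hx hy.1
        exact (hasDerivAt_aux ε a y hy0).differentiableAt.differentiableWithinAt
      · intro y hy
        rw [interior_Icc] at hy
        have hy0 : 0 < y := lt_trans hx hy.1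
        rw [(hasDerivAt_aux ε a y hy0).deriv]
        have h1 : y < a := hy.2
        have hyε : y < ε := lt_of_lt_of_le h1 hae
        have h2 : y * a < ε ^ 2 := by nlinarith
        have h3 : 0 < y * a := by positivity
        have heq : 1 / a - (y - a) / ε ^ 2 - 1 / y
            = (y - a) * (ε ^ 2 - y * a) / (y * a * ε ^ 2) := by
          field_simp
          ring
        rw [heq]
        apply div_nonpos_of_nonpos_of_nonneg
        · nlinarith
        · positivity
    have := hanti (Set.mem_Icc.mpr ⟨le_refl x, hxa⟩) (Set.mem_Icc.mpr ⟨hxa, le_refl a⟩) hxa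
    exact this
  · -- g is monotone on [a, x]
    have hmono : MonotoneOn g (Set.Icc a x) := by
      apply monotoneOn_of_deriv_nonneg (convex_Icc a x)
      · exact hcont _ (fun z hz => lt_of_lt_of_le ha hz.1)
      · intro y hy
        rw [interior_Icc] at hy
        have hy0 : 0 < y := lt_trans ha hy.1
        exact (hasDerivAt_aux ε a y hy0).differentiableAt.differentiableWithinAt
      · intro y hy
        rw [interior_Icc] at hy
        have hy0 : 0 < y := lt_trans ha hy.1
        rw [(hasDerivAt_aux ε a y hy0).deriv]
        have h1 : a < y := hy.1
        have hyε : y < ε := lt_of_lt_of_le hy.2 hxe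
        have h2 : y * a < ε ^ 2 := by nlinarith
        have h3 : 0 < y * a := by positivity
        have heq : 1 / a - (y - a) / ε ^ 2 - 1 / y
            = (y - a) * (ε ^ 2 - y * a) / (y * a * ε ^ 2) := by
          field_simp
          ring
        rw [heq]
        apply div_nonneg
        · nlinarith
        · positivity
    exact hmono (Set.mem_Icc.mpr ⟨le_refl a, hax⟩) (Set.mem_Icc.mpr ⟨hax, le_refl x⟩) hax

/-- If `p` is a probability vector with all coordinates in `(0, ε]`, then the
log-likelihood ratio against the uniform weights is bounded by a negative quadratic:
`∑ log (n pᵢ) ≤ -(1/(2ε²)) ∑ (pᵢ - 1/n)²`. -/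
theorem loglik_quadratic_bound (n : ℕ) (hn : 2 ≤ n) (ε : ℝ) (hε : 0 < ε)
    (p : Fin n → ℝ) (hp : ∀ i, 0 < p i) (hpe : ∀ i, p i ≤ ε)
    (hsum : ∑ i, p i = 1) :
    ∑ i, Real.log (n * p i) ≤ -(1 / (2 * ε ^ 2)) * ∑ i, (p i - 1 / n) ^ 2 := by
  have hn0 : (0:ℝ) < n := by positivity
  have hnε : (1:ℝ) / n ≤ ε := by
    have h1 : (1:ℝ) ≤ n * ε := by
      calc (1:ℝ) = ∑ i, p i := hsum.symm
        _ ≤ ∑ _i : Fin n, ε := Finset.sum_le_sum (fun i _ => hpe i)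
        _ = n * ε := by simp [mul_comm]
    rw [div_le_iff₀ hn0]
    linarith [mul_comm ε (n:ℝ)]
  have hn1 : (0:ℝ) < 1 / n := by positivity
  have hkey : ∀ i, Real.log ((n:ℝ) * p i) ≤
      (p i - 1 / n) * n - (p i - 1 / n) ^ 2 / (2 * ε ^ 2) := by
    intro i
    have h := key_ineq ε (1 / n) (p i) hε hn1 hnε (hp i) (hpe i)
    have hlog : Real.log ((n:ℝ) * p i) = Real.log (p i) - Real.log (1 / n) := by
      rw [Real.log_mul (ne_of_gt hn0) (ne_of_gt (hp i)), one_div, Real.log_inv]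
      ring
    have hdiv : (p i - 1 / n) / (1 / n) = (p i - 1 / n) * n := by
      field_simp
    rw [hlog]
    rw [hdiv] at h
    exact h
  calc ∑ i, Real.log ((n:ℝ) * p i)
      ≤ ∑ i, ((p i - 1 / n) * n - (p i - 1 / n) ^ 2 / (2 * ε ^ 2)) :=
        Finset.sum_le_sum (fun i _ => hkey i)
    _ = (∑ i, (p i - 1 / n)) * n - (∑ i, (p i - 1 / n) ^ 2) / (2 * ε ^ 2) := by
        rw [Finset.sum_sub_distrib, ← Finset.sum_mul, Finset.sum_div]
    _ = -(1 / (2 * ε ^ 2)) * ∑ i, (p i - 1 / n) ^ 2 := by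
        have hzero : ∑ i, (p i - 1 / n) = 0 := by
          rw [Finset.sum_sub_distrib, hsum]
          simp [Finset.card_fin]
          field_simp
          norm_num
        rw [hzero]
        ring
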